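/- Let $x \sim \mathbb{U}(-1,1)$. For $(\widetilde z,\widetilde{xz})$ feasible with $\widetilde z\in(-1,1)$ and $0\le\widetilde{xz}\le(1-\widetilde z^2)/2$, the two-level design $p(x)=\ell\mathbf{1}(x<t)+\mathbf{1}(x\ge t)$ with $t = 1 - 2\widetilde{xz}/(1-\widetilde z)$ and $\ell = \frac{1}{2}\cdot\frac{1-\widetilde z^2 - 2\widetilde{xz}}{1-\widetilde z-\widetilde{xz}}$ satisfies the constraints $2\mathbb{E}(p(x))-1 = \widetilde z$ and $2\mathbb{E}(x\,p(x)) = \widetilde{xz}$ (assuming the formula for $\ell$ yields $\ell\in[0,1]$ and $t\in[-1,1]$). -/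

import Mathlib

open MeasureTheory Set

/-- For `x ~ U(-1,1)`, the two-level design with the closed-form
parameters `t = 1 - 2 x̃z/(1-z̃)` and `ℓ = (1/2)(1-z̃²-2x̃z)/(1-z̃-x̃z)` satisfies the
treated-fraction and short-term-gain constraints. -/
theorem stmt14 (μ : Measure ℝ)
    (hμ : μ = (ENNReal.ofReal (1/2)) • (volume.restrict (Ioo (-1:ℝ) 1)))
    (zt xzt : ℝ) (hz : zt ∈ Ioo (-1:ℝ) 1)
    (hxz0 : 0 ≤ xzt) (hxzmax : xzt ≤ (1 - zt^2)/2)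
    (t l : ℝ)
    (htd : t = 1 - 2*xzt/(1 - zt))
    (hld : l = (1/2) * (1 - zt^2 - 2*xzt)/(1 - zt - xzt))
    (hl01 : l ∈ Icc (0:ℝ) 1) (ht11 : t ∈ Icc (-1:ℝ) 1)
    (p : ℝ → ℝ) (hp : p = fun x => if x < t then l else 1) :
    2 * ∫ x, p x ∂μ - 1 = zt ∧ 2 * ∫ x, x * p x ∂μ = xzt := by
  obtain ⟨hz1, hz2⟩ := hz
  obtain ⟨ht1, ht2⟩ := ht11
  have hzne : (0:ℝ) < 1 - zt := by linarith
  have hden : (0:ℝ) < 1 - zt - xzt := by nlinarith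
  have hne : ∀ᵐ x : ℝ ∂volume, x ≠ t := by
    rw [ae_iff]
    simp
  -- a.e. equalities on the two pieces
  have haeL : ∀ {f g : ℝ → ℝ}, (∀ x, x < t → f x = g x) →
      f =ᵐ[volume.restrict (Set.uIoc (-1:ℝ) t)] g := by
    intro f g hfg
    filter_upwards [ae_restrict_of_ae hne, ae_restrict_mem measurableSet_uIoc]
      with x hxne hxmem
    rw [uIoc_of_le ht1] at hxmem
    exact hfg x (lt_of_le_of_ne hxmem.2 hxne)
  have haeR : ∀ {f g : ℝ → ℝ}, (∀ x, t < x → f x = g x) →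
      f =ᵐ[volume.restrict (Set.uIoc t (1:ℝ))] g := by
    intro f g hfg
    filter_upwards [ae_restrict_mem measurableSet_uIoc] with x hxmem
    rw [uIoc_of_le ht2] at hxmem
    exact hfg x hxmem.1
  have hpl : ∀ x, x < t → (fun y => l) x = p x := by
    intro x hx; simp [hp, hx]
  have hpr : ∀ x, t < x → (fun y => (1:ℝ)) x = p x := by
    intro x hx; simp [hp, not_lt.mpr hx.le]
  have hxpl : ∀ x, x < t → (fun y => y * l) x = x * p x := by
    intro x hx; simp [hp, hx]
  have hxpr : ∀ x, t < x → (fun y => y * (1:ℝ)) x = x * p x := by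
    intro x hx; simp [hp, not_lt.mpr hx.le]
  -- interval integrability
  have hintL : IntervalIntegrable p volume (-1) t :=
    (intervalIntegrable_const (c := l)).congr_ae (haeL hpl)
  have hintR : IntervalIntegrable p volume t 1 :=
    (intervalIntegrable_const (c := (1:ℝ))).congr_ae (haeR hpr)
  have hintL' : IntervalIntegrable (fun x => x * p x) volume (-1) t :=
    ((continuous_id.intervalIntegrable (-1) t).mul_const l).congr_ae (haeL hxpl)
  have hintR' : IntervalIntegrable (fun x => x * p x) volume t 1 :=
    ((continuous_id.intervalIntegrable t 1).mul_const (1:ℝ)).congr_ae (haeR hxpr)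
  -- compute the four interval integrals
  have e1 : ∫ x in (-1:ℝ)..t, p x = l * (t + 1) := by
    have h : ∫ x in (-1:ℝ)..t, p x = ∫ x in (-1:ℝ)..t, l := by
      apply intervalIntegral.integral_congr_ae
      filter_upwards [hne] with x hxne hmem
      rw [uIoc_of_le ht1] at hmem
      simp [hp, lt_of_le_of_ne hmem.2 hxne]
    rw [h]; simp; ring
  have e2 : ∫ x in t..(1:ℝ), p x = 1 - t := by
    have h : ∫ x in t..(1:ℝ), p x = ∫ x in t..(1:ℝ), (1:ℝ) := by
      apply intervalIntegral.integral_congr_ae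
      filter_upwards [hne] with x hxne hmem
      rw [uIoc_of_le ht2] at hmem
      simp [hp, not_lt.mpr hmem.1.le]
    rw [h]; simp
  have e3 : ∫ x in (-1:ℝ)..t, x * p x = l * (t^2 - 1) / 2 := by
    have h : ∫ x in (-1:ℝ)..t, x * p x = ∫ x in (-1:ℝ)..t, x * l := by
      apply intervalIntegral.integral_congr_ae
      filter_upwards [hne] with x hxne hmem
      rw [uIoc_of_le ht1] at hmem
      simp [hp, lt_of_le_of_ne hmem.2 hxne]
    rw [h, intervalIntegral.integral_mul_const, integral_id]
    ring
  have e4 : ∫ x in t..(1:ℝ), x * p x = (1 - t^2) / 2 := by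
    have h : ∫ x in t..(1:ℝ), x * p x = ∫ x in t..(1:ℝ), x * 1 := by
      apply intervalIntegral.integral_congr_ae
      filter_upwards [hne] with x hxne hmem
      rw [uIoc_of_le ht2] at hmem
      simp [hp, not_lt.mpr hmem.1.le]
    rw [h]
    rw [intervalIntegral.integral_mul_const, integral_id]
    ring
  -- convert the μ-integrals
  have hIoo : ∀ f : ℝ → ℝ, ∫ x in Ioo (-1:ℝ) 1, f x = ∫ x in (-1:ℝ)..1, f x := by
    intro f
    rw [intervalIntegral.integral_of_le (by norm_num),
      setIntegral_congr_set Ioo_ae_eq_Ioc]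
  have hsplit1 : ∫ x in (-1:ℝ)..1, p x = l * (t + 1) + (1 - t) := by
    rw [← intervalIntegral.integral_add_adjacent_intervals hintL hintR, e1, e2]
  have hsplit2 : ∫ x in (-1:ℝ)..1, x * p x = l * (t^2 - 1) / 2 + (1 - t^2) / 2 := by
    rw [← intervalIntegral.integral_add_adjacent_intervals hintL' hintR', e3, e4]
  have hμint : ∀ f : ℝ → ℝ, ∫ x, f x ∂μ = (1/2) * ∫ x in (-1:ℝ)..1, f x := by
    intro f
    rw [hμ, integral_smul_measure, ← hIoo f, ENNReal.toReal_ofReal (by norm_num)]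
    simp
  rw [hμint, hμint, hsplit1, hsplit2, htd, hld]
  constructor
  · field_simp
    ring
  · field_simp
    ring
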